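/- Let C : [0,1] → O(N) be a differentiable curve of orthogonal matrices and suppose Cᵀ C' is expressed as (CᵀC')_{ij} = ∑_k v_k Θ^k_{ij} for fixed linearly independent vectors (playing the role of dφ) with coefficients Θ satisfying Θ^k_{ij} = Θ^i_{kj} (integrability) for all i,j,k. Then C' = 0, i.e., C is constant. -/

import Mathlib

open Matrix

attribute [local instance] Matrix.normedAddCommGroup Matrix.normedSpace

/-- A differentiable curve of orthogonal matrices whose logarithmic derivative
Cᵀ C' is expressed in a linearly independent family with coefficients Θ
satisfying the integrability symmetry Θ^k_{ij} = Θ^i_{kj} must be constant. -/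
theorem constant_orthogonal_curve (N : ℕ)
    (C C' : ℝ → Matrix (Fin N) (Fin N) ℝ)
    (hder : ∀ t, HasDerivAt C (C' t) t)
    (horth : ∀ t, (C t)ᵀ * C t = 1)
    (v : Fin N → ℝ → ℝ) (hv : LinearIndependent ℝ v)
    (Θ : Fin N → Fin N → Fin N → ℝ)
    (hrep : ∀ t i j, ((C t)ᵀ * C' t) i j = ∑ k, v k t * Θ k i j)
    (hsym : ∀ i j k, Θ k i j = Θ i k j) :
    (∀ t, C' t = 0) ∧ ∀ s t, C s = C t := by
  -- entrywise derivatives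
  have hentry : ∀ i j t, HasDerivAt (fun t => C t i j) (C' t i j) t := by
    intro i j t
    exact ((LinearMap.toContinuousLinearMap
        ((LinearMap.proj j).comp (LinearMap.proj i :
          (Matrix (Fin N) (Fin N) ℝ) →ₗ[ℝ] (Fin N → ℝ)))).hasFDerivAt.comp_hasDerivAt t (hder t))
  -- skew-symmetry of M = Cᵀ C'
  have hskew : ∀ t i j, ((C t)ᵀ * C' t) i j + ((C t)ᵀ * C' t) j i = 0 := by
    intro t i j
    have h1 : HasDerivAt (fun t => ∑ k, C t k i * C t k j)
        (∑ k, (C' t k i * C t k j + C t k i * C' t k j)) t :=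
      HasDerivAt.fun_sum fun k _ => (hentry k i t).mul (hentry k j t)
    have h2 : (fun t => ∑ k, C t k i * C t k j) = fun _ => (1 : Matrix (Fin N) (Fin N) ℝ) i j := by
      funext s
      have := congrFun (congrFun (horth s) i) j
      simpa [Matrix.mul_apply, Matrix.transpose_apply] using this
    have h3 : HasDerivAt (fun t => ∑ k, C t k i * C t k j) 0 t := by
      rw [h2]; exact hasDerivAt_const _ _
    have h4 := h1.unique h3
    have : ∑ k, (C' t k i * C t k j + C t k i * C' t k j) = 0 := h4
    rw [Finset.sum_add_distrib] at this
    simp only [Matrix.mul_apply, Matrix.transpose_apply]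
    rw [← this]
    ring_nf
    congr 1; exact Finset.sum_congr rfl fun k _ => by ring
  -- Θ is antisymmetric in (i,j)
  have hanti : ∀ k i j, Θ k i j + Θ k j i = 0 := by
    intro k i j
    have hsum : ∀ t, ∑ l, (Θ l i j + Θ l j i) • v l t = 0 := by
      intro t
      have := hskew t i j
      rw [hrep t i j, hrep t j i, ← Finset.sum_add_distrib] at this
      rw [← this]
      exact Finset.sum_congr rfl fun l _ => by simp [smul_eq_mul]; ring
    have := Fintype.linearIndependent_iff.mp hv (fun l => Θ l i j + Θ l j i) (funext fun t => by
      simpa using hsum t) k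
    simpa using this
  -- Θ = 0
  have hzero : ∀ k i j, Θ k i j = 0 := by
    intro k i j
    have h1 : Θ k i j = - Θ k j i := by linarith [hanti k i j]
    have e : Θ k i j = - Θ k i j := by
      calc Θ k i j = Θ i k j := hsym i j k
        _ = - Θ i j k := by linarith [hanti i k j]
        _ = - Θ j i k := by rw [hsym j k i]
        _ = Θ j k i := by linarith [hanti j i k]
        _ = Θ k j i := hsym k i j
        _ = - Θ k i j := by linarith [hanti k i j]
    linarith
  -- Cᵀ C' = 0
  have hM : ∀ t, (C t)ᵀ * C' t = 0 := by
    intro t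
    funext i j
    rw [hrep t i j]
    simp [hzero]
  have hC' : ∀ t, C' t = 0 := by
    intro t
    have hcc : C t * (C t)ᵀ = 1 := mul_eq_one_comm.mp (horth t)
    calc C' t = (C t * (C t)ᵀ) * C' t := by rw [hcc, one_mul]
      _ = C t * ((C t)ᵀ * C' t) := by rw [Matrix.mul_assoc]
      _ = 0 := by rw [hM t, Matrix.mul_zero]
  refine ⟨hC', fun s t => ?_⟩
  exact is_const_of_deriv_eq_zero (fun x => (hder x).differentiableAt) (fun x => by
    rw [(hder x).deriv, hC' x]) s t
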